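/- In any metabelian Novikov algebra A, for all a,b,c,d,e in A, (((a*b)*c)*d)*e = (((a*c)*b)*d)*e, i.e., in left-normed products of degree 5 the second and third factors can be interchanged. -/
import Mathlib


/-- Setting: a nonassociative (nonunital) algebra over a field of characteristic 0. -/
theorem stmt_8 {K : Type*} [Field K] [CharZero K]
    {A : Type*} [NonUnitalNonAssocRing A] [Module K A]
    [SMulCommClass K A A] [IsScalarTower K A A]
    (lcom : ∀ a b c : A, a*(b*c) = b*(a*c))
    (rsym : ∀ a b c : A, (a*b)*c - a*(b*c) = (a*c)*b - a*(c*b))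
    (metab : ∀ a b c d : A, (a*b)*(c*d) = 0) :
    ∀ a b c d e : A, (((a*b)*c)*d)*e = (((a*c)*b)*d)*e := by
  -- Any left multiple of a left-normed product of three factors vanishes.
  have L2 : ∀ u x y z : A, u * ((x*y)*z) = 0 := by
    intro u x y z
    rw [lcom u (x*y) z, metab]
  -- Inner factors may be swapped under two left multiplications.
  have L1 : ∀ u z y w : A, u*(z*(y*w)) = u*(z*(w*y)) := by
    intro u z y w
    have h := rsym z y w
    have h2 : z*(y*w) - z*(w*y) = (z*y)*w - (z*w)*y :=
      (sub_eq_sub_iff_sub_eq_sub.mp h).symm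
    have key : u*(z*(y*w)) - u*(z*(w*y)) = 0 := by
      rw [← mul_sub, h2, mul_sub, L2, L2, sub_zero]
    exact sub_eq_zero.mp key
  -- Reduction rule for right multiplication of a right-nested product.
  have L3 : ∀ p q r m : A, (p*(q*r))*m = -(p*(q*(m*r))) := by
    intro p q r m
    have h := rsym p (q*r) m
    rw [L2 p q r m, metab, lcom m q r, sub_zero, zero_sub] at h
    exact h
  intro a b c d e
  have e1 : ((a*(b*c))*d)*e = a*(b*(e*(d*c))) := by
    rw [L3 a b c d, neg_mul, L3 a b (d*c) e, neg_neg]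
  have e2 : ((a*(c*b))*d)*e = a*(c*(e*(d*b))) := by
    rw [L3 a c b d, neg_mul, L3 a c (d*b) e, neg_neg]
  have e3 : a*(b*(e*(d*c))) = a*(c*(e*(d*b))) := by
    rw [L1 b e d c, lcom e c d, lcom b c (e*d), L1 c e d b, lcom e b d]
  rw [← sub_eq_zero, ← sub_mul, ← sub_mul,
    sub_eq_sub_iff_sub_eq_sub.mp (rsym a b c), sub_mul, sub_mul,
    e1, e2, e3, sub_self]
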